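/- For the extended loop Schrödinger–Virasoro Lie conformal algebra, the bilinear maps ψ defined by ψ_λ(N_i,N_j) = q_{i+j}λ (all other pairs zero) and φ defined by φ_λ(L_i,N_j) = −e_{i+j}λ², φ_λ(N_j,L_i) = e_{i+j}λ² (all other pairs zero), for any functions q, e: ℤ → ℂ, are 2-cocycles. -/
import Mathlib


open Polynomial

/-- Generators of the extended loop Schrödinger–Virasoro Lie conformal algebra. -/
inductive GenE : Type
  | L : ℤ → GenE
  | M : ℤ → GenE
  | Y : ℤ → GenE
  | N : ℤ → GenE
  deriving DecidableEq

/-- The λ-bracket of generators of the extended loop Schrödinger–Virasoro Lie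
conformal algebra (λ evaluated at `l`, ∂ = `X`). -/
noncomputable def brE (l : ℂ) : GenE → GenE → (GenE →₀ Polynomial ℂ)
  | GenE.L i, GenE.L j => Finsupp.single (GenE.L (i + j)) (X + C (2 * l))
  | GenE.L i, GenE.M j => Finsupp.single (GenE.M (i + j)) (X + C l)
  | GenE.M i, GenE.L j => Finsupp.single (GenE.M (i + j)) (C l)
  | GenE.L i, GenE.Y j => Finsupp.single (GenE.Y (i + j)) (X + C ((3/2) * l))
  | GenE.Y i, GenE.L j => Finsupp.single (GenE.Y (i + j)) (C (1/2) * X + C ((3/2) * l))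
  | GenE.Y i, GenE.Y j => Finsupp.single (GenE.M (i + j)) (X + C (2 * l))
  | GenE.L i, GenE.N j => Finsupp.single (GenE.N (i + j)) (X + C l)
  | GenE.N i, GenE.L j => Finsupp.single (GenE.N (i + j)) (C l)
  | GenE.N i, GenE.M j => Finsupp.single (GenE.M (i + j)) (C 2)
  | GenE.M i, GenE.N j => Finsupp.single (GenE.M (i + j)) (C (-2))
  | GenE.N i, GenE.Y j => Finsupp.single (GenE.Y (i + j)) 1
  | GenE.Y i, GenE.N j => Finsupp.single (GenE.Y (i + j)) (C (-1))
  | _, _ => 0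

/-- ψ with ψ_λ(N_i,N_j) = q_{i+j}λ, all other pairs zero. -/
noncomputable def psiQ (q : ℤ → ℂ) : GenE → GenE → Polynomial ℂ
  | GenE.N i, GenE.N j => C (q (i + j)) * X
  | _, _ => 0

/-- φ with φ_λ(L_i,N_j) = −e_{i+j}λ², φ_λ(N_j,L_i) = e_{i+j}λ², all other pairs zero. -/
noncomputable def phiE (e : ℤ → ℂ) : GenE → GenE → Polynomial ℂ
  | GenE.L i, GenE.N j => C (-(e (i + j))) * X ^ 2
  | GenE.N i, GenE.L j => C (e (i + j)) * X ^ 2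
  | _, _ => 0

set_option maxHeartbeats 1600000 in
/-- For any q, e : ℤ → ℂ, both ψ and φ are 2-cocycles on the extended loop
Schrödinger–Virasoro Lie conformal algebra: skew-symmetric and satisfying the
cocycle Jacobi identity φ_{λ+μ}([x λ y],z) = φ_λ(x,[y μ z]) − φ_μ(y,[x λ z]). -/
theorem stmt_12 (q e : ℤ → ℂ) :
    (∀ (x y : GenE) (l : ℂ), (psiQ q x y).eval l = -((psiQ q y x).eval (-l)))
    ∧ (∀ (x y z : GenE) (l m : ℂ),
        ((brE l x y).sum fun h p => p.eval (-(l + m)) * (psiQ q h z).eval (l + m))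
          = ((brE m y z).sum fun h p => p.eval l * (psiQ q x h).eval l)
            - ((brE l x z).sum fun h p => p.eval m * (psiQ q y h).eval m))
    ∧ (∀ (x y : GenE) (l : ℂ), (phiE e x y).eval l = -((phiE e y x).eval (-l)))
    ∧ (∀ (x y z : GenE) (l m : ℂ),
        ((brE l x y).sum fun h p => p.eval (-(l + m)) * (phiE e h z).eval (l + m))
          = ((brE m y z).sum fun h p => p.eval l * (phiE e x h).eval l)
            - ((brE l x z).sum fun h p => p.eval m * (phiE e y h).eval m)) := by
  refine ⟨?_, ?_, ?_, ?_⟩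
  · intro x y l
    cases x <;> cases y <;> simp [psiQ] <;> ring_nf <;> tauto
  · intro x y z l m
    cases x <;> cases y <;> cases z <;>
      simp only [brE, psiQ, Finsupp.sum_single_index, Finsupp.sum_zero_index,
        eval_add, eval_mul, eval_C, eval_X, eval_one, eval_zero, eval_pow,
        zero_mul, mul_zero, add_comm, add_left_comm] <;> ring
  · intro x y l
    cases x <;> cases y <;> simp [phiE] <;> ring_nf <;> tauto
  · intro x y z l m
    cases x <;> cases y <;> cases z <;>
      simp only [brE, phiE, Finsupp.sum_single_index, Finsupp.sum_zero_index,
        eval_add, eval_mul, eval_C, eval_X, eval_one, eval_zero, eval_pow,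
        zero_mul, mul_zero, add_comm, add_left_comm] <;> ring
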